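/- Let G be a free group with basis {g_j : j ∈ J} and Fox derivatives D_j of ℤ[G]. Let H be a subgroup of G with free basis {x_i : i ∈ I} and corresponding Fox derivatives ∂_i of ℤ[H]. Then for every v ∈ H one has the chain rule D_j(v) = Σ_k D_j(x_k)·∂_k(v) in ℤ[G]. -/

import Mathlib

open MonoidAlgebra

/-- The augmentation homomorphism `ℤ[F] → ℤ`. -/
noncomputable def aug (J : Type) : MonoidAlgebra ℤ (FreeGroup J) →ₐ[ℤ] ℤ :=
  MonoidAlgebra.lift ℤ ℤ (FreeGroup J) 1

/-- `D` is the Fox derivative of `ℤ[FreeGroup J]` with respect to the generator `k`. -/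
structure IsFoxDeriv (J : Type) [DecidableEq J] (k : J)
    (D : MonoidAlgebra ℤ (FreeGroup J) → MonoidAlgebra ℤ (FreeGroup J)) : Prop where
  map_add : ∀ u v, D (u + v) = D u + D v
  leibniz : ∀ u v, D (u * v) = D u * v + aug J u • D v
  on_gen : ∀ j : J, D (MonoidAlgebra.of ℤ (FreeGroup J) (FreeGroup.of j)) =
      if k = j then 1 else 0

lemma aug_of (J : Type) (g : FreeGroup J) : aug J (MonoidAlgebra.of ℤ (FreeGroup J) g) = 1 := by
  simp [aug, MonoidAlgebra.lift_of]

section helpers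
variable {J : Type} [DecidableEq J] {k : J}
  {D : MonoidAlgebra ℤ (FreeGroup J) → MonoidAlgebra ℤ (FreeGroup J)}
  (h : IsFoxDeriv J k D)

include h

lemma fd_one : D 1 = 0 := by
  have h1 := h.leibniz 1 1
  rw [mul_one] at h1
  have h2 : aug J (1 : MonoidAlgebra ℤ (FreeGroup J)) = 1 := map_one _
  rw [h2, one_smul, mul_one] at h1
  exact left_eq_add.mp h1

lemma fd_mul (g g' : FreeGroup J) :
    D (MonoidAlgebra.of ℤ (FreeGroup J) (g * g')) =
      D (MonoidAlgebra.of ℤ (FreeGroup J) g) * MonoidAlgebra.of ℤ (FreeGroup J) g' +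
        D (MonoidAlgebra.of ℤ (FreeGroup J) g') := by
  rw [map_mul, h.leibniz, aug_of, one_smul]

lemma fd_mul' (g g' : FreeGroup J) :
    D (MonoidAlgebra.of ℤ (FreeGroup J) g * MonoidAlgebra.of ℤ (FreeGroup J) g') =
      D (MonoidAlgebra.of ℤ (FreeGroup J) g) * MonoidAlgebra.of ℤ (FreeGroup J) g' +
        D (MonoidAlgebra.of ℤ (FreeGroup J) g') := by
  rw [← map_mul]; exact fd_mul h g g'

lemma fd_inv (g : FreeGroup J) :
    D (MonoidAlgebra.of ℤ (FreeGroup J) g⁻¹) =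
      -(D (MonoidAlgebra.of ℤ (FreeGroup J) g) * MonoidAlgebra.of ℤ (FreeGroup J) g⁻¹) := by
  have h1 := fd_mul h g g⁻¹
  rw [mul_inv_cancel] at h1
  have h2 : (MonoidAlgebra.of ℤ (FreeGroup J)) (1 : FreeGroup J) = 1 := map_one _
  rw [h2, fd_one h] at h1
  exact (eq_neg_of_add_eq_zero_right h1.symm)

end helpers

lemma psi_of {I J : Type} (φ : FreeGroup I →* FreeGroup J) (g : FreeGroup I) :
    MonoidAlgebra.mapDomainAlgHom ℤ ℤ φ (MonoidAlgebra.of ℤ (FreeGroup I) g) =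
      MonoidAlgebra.of ℤ (FreeGroup J) (φ g) := by
  simp [MonoidAlgebra.mapDomainAlgHom, MonoidAlgebra.of_apply, Finsupp.mapDomain_single]

lemma fd_support_finite {I : Type} [DecidableEq I]
    (Dd : I → MonoidAlgebra ℤ (FreeGroup I) → MonoidAlgebra ℤ (FreeGroup I))
    (hDd : ∀ i, IsFoxDeriv I i (Dd i)) (v : FreeGroup I) :
    (Function.support fun k => Dd k (MonoidAlgebra.of ℤ (FreeGroup I) v)).Finite := by
  induction v using FreeGroup.induction_on with
  | C1 =>
    have : ∀ k, Dd k (MonoidAlgebra.of ℤ (FreeGroup I) 1) = 0 := by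
      intro k; rw [map_one]; exact fd_one (hDd k)
    rw [Function.support_eq_empty_iff.mpr (funext this)]
    exact Set.finite_empty
  | of i =>
    apply Set.Finite.subset (Set.finite_singleton i)
    intro k hk
    simp only [Function.mem_support] at hk
    by_contra hne
    simp only [Set.mem_singleton_iff] at hne
    apply hk
    have := (hDd k).on_gen i
    rw [if_neg hne] at this
    exact this
  | inv_of i ih =>
    apply Set.Finite.subset ih
    intro k hk
    simp only [Function.mem_support] at hk ⊢
    intro h0
    apply hk
    rw [fd_inv (hDd k), h0, zero_mul, neg_zero]
  | mul u w ihu ihw =>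
    apply Set.Finite.subset (Set.Finite.union ihu ihw)
    intro k hk
    simp only [Function.mem_support, Set.mem_union] at hk ⊢
    by_contra hc
    push_neg at hc
    apply hk
    rw [fd_mul (hDd k), hc.1, hc.2, zero_mul, zero_add]

theorem fox_deriv_chain_rule (J I : Type) [DecidableEq J] [DecidableEq I]
    (D : J → MonoidAlgebra ℤ (FreeGroup J) → MonoidAlgebra ℤ (FreeGroup J))
    (hD : ∀ j, IsFoxDeriv J j (D j))
    (Dd : I → MonoidAlgebra ℤ (FreeGroup I) → MonoidAlgebra ℤ (FreeGroup I))
    (hDd : ∀ i, IsFoxDeriv I i (Dd i))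
    (φ : FreeGroup I →* FreeGroup J) (hφ : Function.Injective φ)
    (x : I → FreeGroup J) (hx : ∀ i, φ (FreeGroup.of i) = x i)
    (v : FreeGroup I) (j : J) :
    D j (MonoidAlgebra.of ℤ (FreeGroup J) (φ v)) =
      ∑ᶠ k : I, D j (MonoidAlgebra.of ℤ (FreeGroup J) (x k)) *
        MonoidAlgebra.mapDomainAlgHom ℤ ℤ φ (Dd k (MonoidAlgebra.of ℤ (FreeGroup I) v)) := by
  induction v using FreeGroup.induction_on with
  | C1 =>
    rw [map_one, map_one, fd_one (hD j)]
    have : ∀ k : I, D j (MonoidAlgebra.of ℤ (FreeGroup J) (x k)) *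
        MonoidAlgebra.mapDomainAlgHom ℤ ℤ φ (Dd k (MonoidAlgebra.of ℤ (FreeGroup I) 1)) = 0 := by
      intro k
      rw [map_one, fd_one (hDd k), map_zero, mul_zero]
    rw [finsum_congr this, finsum_zero]
  | of i =>
    have hpure : (pure i : FreeGroup I) = FreeGroup.of i := rfl
    rw [hx i]
    rw [finsum_eq_single _ i]
    · rw [(hDd i).on_gen i, if_pos rfl, map_one, mul_one]
    · intro k hk
      rw [(hDd k).on_gen i, if_neg (by exact_mod_cast hk), map_zero, mul_zero]
  | inv_of i ih =>
    have hpure : (pure i : FreeGroup I) = FreeGroup.of i := rfl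
    have hφi : φ (FreeGroup.of i)⁻¹ = (x i)⁻¹ := by rw [map_inv, hx i]
    rw [hφi, fd_inv (hD j)]
    rw [finsum_eq_single _ i]
    · rw [fd_inv (hDd i), (hDd i).on_gen i, if_pos rfl, one_mul, map_neg, psi_of,
        hφi, mul_neg]
    · intro k hk
      rw [fd_inv (hDd k), (hDd k).on_gen i, if_neg (by exact_mod_cast hk), zero_mul,
        neg_zero, map_zero, mul_zero]
  | mul u w ihu ihw =>
    have h1 : ∀ z : FreeGroup I, (Function.support fun k =>
        D j (MonoidAlgebra.of ℤ (FreeGroup J) (x k)) *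
          MonoidAlgebra.mapDomainAlgHom ℤ ℤ φ (Dd k (MonoidAlgebra.of ℤ (FreeGroup I) z))).Finite := by
      intro z
      apply (fd_support_finite Dd hDd z).subset
      intro k hk
      simp only [Function.mem_support] at hk ⊢
      intro h0
      exact hk (by rw [h0, map_zero, mul_zero])
    have h2 : (Function.support fun k =>
        D j (MonoidAlgebra.of ℤ (FreeGroup J) (x k)) *
          MonoidAlgebra.mapDomainAlgHom ℤ ℤ φ (Dd k (MonoidAlgebra.of ℤ (FreeGroup I) u)) *
          MonoidAlgebra.of ℤ (FreeGroup J) (φ w)).Finite := by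
      apply (h1 u).subset
      intro k hk
      simp only [Function.mem_support] at hk ⊢
      intro h0
      exact hk (by rw [h0, zero_mul])
    rw [map_mul φ, map_mul, fd_mul' (hD j), ihu, ihw,
      finsum_mul' _ _ (h1 u), ← finsum_add_distrib h2 (h1 w)]
    apply finsum_congr
    intro k
    rw [map_mul, fd_mul' (hDd k), map_add, map_mul, psi_of, mul_add, mul_assoc]
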